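/- A sequence (a₁, …, a_d) ∈ ℝ^d is a Nuij sequence if and only if the polynomial q_a(z) = z^d + Σ_{k=1}^d a_k · (d!/(d-k)!) · z^{d-k} is hyperbolic. -/

import Mathlib

open Polynomial
open Finset

/-- A real polynomial is hyperbolic if all its complex roots are real. -/
def Hyperbolic (p : Polynomial ℝ) : Prop :=
  ∀ z : ℂ, Polynomial.aeval z p = 0 → z.im = 0

/-- The perturbed polynomial `p_a(·, s) = p + ∑_{k=1}^d a_k s^k p^{(k)}`. -/
noncomputable def NuijPencil (d : ℕ) (a : ℕ → ℝ) (p : Polynomial ℝ) (s : ℝ) : Polynomial ℝ :=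
  p + ∑ k ∈ Finset.Icc 1 d, (a k * s ^ k) • (Polynomial.derivative^[k] p)

/-- `(a₁, …, a_d)` is a Nuij sequence: the pencil is hyperbolic for every
hyperbolic `p` of degree `d` and every real `s`. -/
def IsNuijSeq (d : ℕ) (a : ℕ → ℝ) : Prop :=
  ∀ p : Polynomial ℝ, p.natDegree = d → Hyperbolic p →
    ∀ s : ℝ, Hyperbolic (NuijPencil d a p s)

/-- Theorem A: `a` is a Nuij sequence iff
`q_a(z) = z^d + ∑_{k=1}^d a_k (d!/(d-k)!) z^{d-k}` is hyperbolic. -/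

lemma multiset_im_sum (M : Multiset ℂ) : M.sum.im = (M.map Complex.im).sum := by
  induction M using Multiset.induction_on with
  | empty => simp
  | cons z M ih => simp [ih]

lemma multiset_sum_neg (M : Multiset ℝ) (hM : M ≠ 0) (h : ∀ x ∈ M, x < 0) : M.sum < 0 := by
  induction M using Multiset.induction_on with
  | empty => simp at hM
  | cons x M ih =>
    rcases eq_or_ne M 0 with rfl | hM0
    · simpa using h x (by simp)
    · have := ih hM0 (fun y hy => h y (by simp [hy]))
      have hx := h x (by simp)
      simp only [Multiset.sum_cons]
      linarith

lemma multiset_abs_sum_le (M : Multiset ℂ) : ‖M.sum‖ ≤ (M.map (‖·‖)).sum := by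
  induction M using Multiset.induction_on with
  | empty => simp
  | cons z M ih =>
    simp only [Multiset.sum_cons, Multiset.map_cons]
    calc ‖z + M.sum‖ ≤ ‖z‖ + ‖M.sum‖ := norm_add_le _ _
    _ ≤ ‖z‖ + (M.map (‖·‖)).sum := by linarith

lemma multiset_sum_lt {α : Type*} (M : Multiset α) (f : α → ℝ) (b : ℝ) (hM : M ≠ 0)
    (h : ∀ x ∈ M, f x < b) : (M.map f).sum < M.card * b := by
  induction M using Multiset.induction_on with
  | empty => simp at hM
  | cons x M ih =>
    rcases eq_or_ne M 0 with rfl | hM0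
    · simpa using h x (by simp)
    · have := ih hM0 (fun y hy => h y (by simp [hy]))
      have hx := h x (by simp)
      simp only [Multiset.map_cons, Multiset.sum_cons, Multiset.card_cons]
      push_cast
      linarith


lemma coeff_polarDf (f : Polynomial ℂ) (c : ℂ) (n : ℕ) (k : ℕ) :
    (C (n:ℂ) * f - (X + C c) * derivative f).coeff k
      = ((n:ℂ) - k) * f.coeff k - c*(k+1)*f.coeff (k+1) := by
  have hX : (X * derivative f).coeff k = (k:ℂ) * f.coeff k := by
    cases k with
    | zero => simp
    | succ j => rw [coeff_X_mul, coeff_derivative]; push_cast; ring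
  rw [coeff_sub, coeff_C_mul, add_mul, coeff_add, hX, coeff_C_mul, coeff_derivative]
  push_cast
  ring


lemma abs_inv_shift (u : ℂ) (t : ℝ) (ht : 0 < t) (hu0 : u ≠ 0) :
    ‖u⁻¹ + Complex.I / (2*t)‖ 
      = ‖2*t + Complex.I*u‖ / (2*t*‖u‖) := by
  have h2t : (2*(t:ℂ)) ≠ 0 := by
    intro h
    have : (t:ℂ) = 0 := by linear_combination h/2
    simp at this; linarith
  have key : u⁻¹ + Complex.I / (2*t) = (2*t + Complex.I*u) / ((((2*t : ℝ)) : ℂ)*u) := by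
    rw [inv_eq_one_div, div_add_div _ _ hu0 h2t]
    push_cast
    ring
  rw [key, norm_div, norm_mul, Complex.norm_real, Real.norm_eq_abs, abs_of_pos (by positivity)]

lemma normSq_shift (u : ℂ) (t : ℝ) :
    Complex.normSq (2*t + Complex.I*u) - Complex.normSq u = 4*t*(t - u.im) := by
  simp [Complex.normSq_apply, Complex.add_re, Complex.add_im, Complex.mul_re, Complex.mul_im]
  ring

lemma disk_of_im_gt (u : ℂ) (t : ℝ) (ht : 0 < t) (hu : t < u.im) :
    ‖u⁻¹ + Complex.I / (2*t)‖ < 1/(2*t) := by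
  have hu0 : u ≠ 0 := by
    intro h; rw [h] at hu; simp at hu; linarith
  have hau : 0 < ‖u‖ := norm_pos_iff.mpr hu0
  rw [abs_inv_shift u t ht hu0]
  rw [div_lt_div_iff₀ (by positivity) (by positivity)]
  have h2 : ‖2*↑t + Complex.I*u‖ < ‖u‖ := by
    have h := normSq_shift u t
    have h3 : Complex.normSq (2*t + Complex.I*u) < Complex.normSq u := by nlinarith
    have e1 := Complex.sq_norm (2*↑t + Complex.I*u)
    have e2 := Complex.sq_norm u
    nlinarith [norm_nonneg (2*↑t + Complex.I*u), norm_nonneg u]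
  calc ‖2*↑t + Complex.I*u‖ * (2*t) < ‖u‖ * (2*t) := by
        exact mul_lt_mul_of_pos_right h2 (by positivity)
    _ = 1 * (2*t*‖u‖) := by ring

lemma disk_of_im_eq (u : ℂ) (t : ℝ) (ht : 0 < t) (hu : u.im = t) :
    ‖u⁻¹ + Complex.I / (2*t)‖ = 1/(2*t) := by
  have hu0 : u ≠ 0 := by
    intro h; rw [h] at hu; simp at hu; linarith
  have hau : 0 < ‖u‖ := norm_pos_iff.mpr hu0
  rw [abs_inv_shift u t ht hu0]
  have h2 : ‖2*↑t + Complex.I*u‖ = ‖u‖ := by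
    have h := normSq_shift u t
    rw [hu] at h; simp at h
    have h3 : Complex.normSq (2*t + Complex.I*u) = Complex.normSq u := by linarith
    rw [Complex.norm_def, Complex.norm_def, h3]
  rw [h2]
  field_simp

-- L1: log derivative over a multiset of roots
lemma logDeriv_multiset (w : ℂ) (M : Multiset ℂ) 
    (h : eval w (M.map (fun z => X - C z)).prod ≠ 0) :
    eval w (derivative (M.map (fun z => X - C z)).prod) =
      eval w (M.map (fun z => X - C z)).prod * (M.map (fun z => (w - z)⁻¹)).sum := by
  induction M using Multiset.induction_on with
  | empty => simp
  | cons z M ih =>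
    simp only [Multiset.map_cons, Multiset.prod_cons, Multiset.sum_cons] at *
    have h1 : (w - z) ≠ 0 := by
      intro h0
      apply h; simp [h0]
    have h2 : eval w (M.map (fun z => X - C z)).prod ≠ 0 := by
      intro h0; apply h; simp [h0]
    rw [derivative_mul]
    simp only [eval_mul, eval_add, eval_sub, eval_X, eval_C, derivative_sub, derivative_X,
      derivative_C, sub_zero, eval_one, ih h2]
    field_simp




lemma card_roots_complex (f : Polynomial ℂ) : f.roots.card = f.natDegree :=
  (Polynomial.splits_iff_card_roots).mp (IsAlgClosed.splits f)

lemma eq_prod_roots (f : Polynomial ℂ) :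
    f = C f.leadingCoeff * (f.roots.map fun a => X - C a).prod :=
  (C_leadingCoeff_mul_prod_multiset_X_sub_C (card_roots_complex f)).symm



-- coeff of f at natDegree - 1
lemma coeff_pred (f : Polynomial ℂ) (d : ℕ) (hd : f.natDegree = d + 1) :
    f.coeff d = f.leadingCoeff * (- f.roots.sum) := by
  conv_lhs => rw [eq_prod_roots f]
  rw [coeff_C_mul]
  congr 1
  have hcard : f.roots.card = d + 1 := by rw [card_roots_complex, hd]
  have h1 := multiset_prod_X_sub_C_nextCoeff f.roots
  rw [nextCoeff_of_natDegree_pos] at h1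
  · rwa [natDegree_multiset_prod_X_sub_C_eq_card, hcard] at h1
  · rw [natDegree_multiset_prod_X_sub_C_eq_card, hcard]; omega

lemma laguerre (f : Polynomial ℂ) (n : ℕ) (hn : 0 < n) (hd : f.natDegree = n)
    (hroots : ∀ z ∈ f.roots, z.im < 0) (c : ℂ) (hc : c.im = 0) :
    ((C (n:ℂ) * f - (X + C c) * derivative f).natDegree = n - 1) ∧
    (C (n:ℂ) * f - (X + C c) * derivative f) ≠ 0 ∧
    ∀ z ∈ (C (n:ℂ) * f - (X + C c) * derivative f).roots, z.im < 0 := by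
  set Df := C (n:ℂ) * f - (X + C c) * derivative f with hDf
  have hf0 : f ≠ 0 := by
    intro h; rw [h] at hd; simp at hd; omega
  have hlc : f.leadingCoeff ≠ 0 := leadingCoeff_ne_zero.mpr hf0
  have hcard : f.roots.card = n := by rw [card_roots_complex, hd]
  have hM0 : f.roots ≠ 0 := by
    intro h; rw [h] at hcard; simp at hcard; omega
  have himsum : f.roots.sum.im < 0 := by
    rw [multiset_im_sum]
    apply multiset_sum_neg
    · simpa using hM0
    · intro x hx
      obtain ⟨z, hz, rfl⟩ := Multiset.mem_map.mp hx
      exact hroots z hz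
  -- top coefficient of Df
  have htop : Df.coeff (n-1) = f.leadingCoeff * (-f.roots.sum - c * n) := by
    rw [hDf, coeff_polarDf f c n (n-1)]
    have h1 : f.coeff (n-1) = f.leadingCoeff * (-f.roots.sum) :=
      coeff_pred f (n-1) (by omega)
    have h2 : (n - 1) + 1 = n := by omega
    have h5 : f.coeff n = f.leadingCoeff := by rw [← hd, coeff_natDegree]
    have h3 : ((n:ℂ) - ((n-1 : ℕ):ℂ)) = 1 := by
      push_cast [Nat.cast_sub hn]; ring
    have h4 : (((n-1:ℕ):ℂ) + 1) = (n:ℂ) := by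
      push_cast [Nat.cast_sub hn]; ring
    rw [h1, h2, h5, h3, h4]
    ring
  have htopne : Df.coeff (n-1) ≠ 0 := by
    rw [htop]
    apply mul_ne_zero hlc
    intro h
    have := congrArg Complex.im h
    simp [hc] at this
    linarith
  have hle : Df.natDegree ≤ n - 1 := by
    rw [natDegree_le_iff_coeff_eq_zero]
    intro N hN
    have hc1 : f.coeff (N+1) = 0 := coeff_eq_zero_of_natDegree_lt (by omega)
    have hc2 : ((n:ℂ) - N) * f.coeff N = 0 := by
      by_cases hNn : N = n
      · subst hNn; simp
      · rw [coeff_eq_zero_of_natDegree_lt (by omega), mul_zero]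
    rw [hDf, coeff_polarDf, hc1, hc2]
    ring
  have hne : Df ≠ 0 := fun h => htopne (by rw [h]; simp)
  have hdeg : Df.natDegree = n - 1 :=
    le_antisymm hle (le_natDegree_of_ne_zero htopne)
  refine ⟨hdeg, hne, ?_⟩
  intro w hw
  by_contra hcon
  push_neg at hcon
  have hroot : eval w Df = 0 := (isRoot_of_mem_roots hw)
  have hfw : eval w f ≠ 0 := by
    intro h
    have : w ∈ f.roots := by
      rw [mem_roots hf0]; exact h
    linarith [hroots w this]
  have heq : (n:ℂ) * eval w f = (w + c) * eval w (derivative f) := by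
    have h0 := hroot
    rw [hDf] at h0
    simp only [eval_sub, eval_mul, eval_add, eval_C, eval_X] at h0
    linear_combination h0
  have hwpc : w + c ≠ 0 := by
    intro h
    rw [h, zero_mul] at heq
    have hn' : (n:ℂ) ≠ 0 := Nat.cast_ne_zero.mpr (by omega)
    exact hfw ((mul_eq_zero.mp heq).resolve_left hn')
  -- pass to roots
  set P := (f.roots.map fun a => X - C a).prod with hP
  have hfact := eq_prod_roots f
  have hfw' : eval w f = f.leadingCoeff * eval w P := by
    conv_lhs => rw [hfact]
    rw [eval_mul, eval_C, hP]
  have hPw : eval w P ≠ 0 := by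
    intro h
    rw [hfw', h, mul_zero] at hfw
    exact hfw rfl
  set Sc := (f.roots.map fun z => (w - z)⁻¹).sum with hSc
  have hfd' : eval w (derivative f) = f.leadingCoeff * (eval w P * Sc) := by
    conv_lhs => rw [hfact]
    rw [derivative_C_mul, eval_mul, eval_C]
    rw [← hP, logDeriv_multiset w f.roots (by rw [← hP] at *; exact hPw), ← hSc, ← hP]
  have hkey : (n:ℂ) = (w + c) * Sc := by
    have h6 : (n:ℂ) * (f.leadingCoeff * eval w P) 
        = ((w + c) * Sc) * (f.leadingCoeff * eval w P) := by
      calc (n:ℂ) * (f.leadingCoeff * eval w P) = (n:ℂ) * eval w f := by rw [hfw']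
        _ = (w + c) * eval w (derivative f) := heq
        _ = (w + c) * (f.leadingCoeff * (eval w P * Sc)) := by rw [hfd']
        _ = ((w + c) * Sc) * (f.leadingCoeff * eval w P) := by ring
    exact mul_right_cancel₀ (mul_ne_zero hlc hPw) h6
  have himterm : ∀ z ∈ f.roots, ((w - z)⁻¹).im < 0 := by
    intro z hz
    have h1 : 0 < (w - z).im := by
      have := hroots z hz
      simp only [Complex.sub_im]
      linarith
    have h2 : w - z ≠ 0 := fun h => by rw [h] at h1; simp at h1
    rw [Complex.inv_im]
    exact div_neg_of_neg_of_pos (by linarith) (Complex.normSq_pos.mpr h2)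
  have himS : Sc.im < 0 := by
    rw [hSc, multiset_im_sum, Multiset.map_map]
    apply multiset_sum_neg
    · simpa using hM0
    · intro x hx
      obtain ⟨z, hz, rfl⟩ := Multiset.mem_map.mp hx
      exact himterm z hz
  rcases eq_or_lt_of_le hcon with him0 | himpos
  · -- w.im = 0
    have h1 : (w + c).im = 0 := by simp [Complex.add_im, ← him0, hc]
    have h2 := congrArg Complex.im hkey
    simp only [Complex.natCast_im, Complex.mul_im, h1, zero_mul, add_zero] at h2
    have h3 : (w + c).re = 0 := by
      rcases mul_eq_zero.mp h2.symm with h | h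
      · exact h
      · linarith
    exact hwpc (Complex.ext h3 h1)
  · -- w.im > 0
    set t := w.im with ht
    have hS2 : Sc = (n:ℂ) * (w + c)⁻¹ := by
      rw [hkey]
      field_simp
    have hA : (f.roots.map fun z => (w - z)⁻¹ + Complex.I / (2*(t:ℂ))).sum
        = Sc + (n:ℂ) * (Complex.I / (2*(t:ℂ))) := by
      rw [Multiset.sum_map_add, Multiset.map_const', Multiset.sum_replicate, hcard,
        nsmul_eq_mul, ← hSc]
    have hbound : ‖(f.roots.map fun z => (w - z)⁻¹ + Complex.I / (2*(t:ℂ))).sum‖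
        < n * (1/(2*t)) := by
      calc ‖(f.roots.map fun z => (w - z)⁻¹ + Complex.I / (2*(t:ℂ))).sum‖
          ≤ ((f.roots.map fun z => (w - z)⁻¹ + Complex.I / (2*(t:ℂ))).map (‖·‖)).sum :=
            multiset_abs_sum_le _
        _ = (f.roots.map fun z => ‖(w - z)⁻¹ + Complex.I / (2*(t:ℂ))‖).sum := by
            rw [Multiset.map_map]; rfl
        _ < f.roots.card * (1/(2*t)) := by
            apply multiset_sum_lt _ _ _ hM0
            intro z hz
            have h7 : t < (w - z).im := by
              have := hroots z hz
              simp only [Complex.sub_im]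
              rw [ht]
              linarith
            exact disk_of_im_gt (w - z) t himpos h7
        _ = n * (1/(2*t)) := by rw [hcard]
    have heqabs : ‖(f.roots.map fun z => (w - z)⁻¹ + Complex.I / (2*(t:ℂ))).sum‖
        = n * (1/(2*t)) := by
      rw [hA, hS2]
      have h8 : (n:ℂ) * (w+c)⁻¹ + (n:ℂ) * (Complex.I / (2*(t:ℂ))) 
          = (n:ℂ) * ((w+c)⁻¹ + Complex.I / (2*(t:ℂ))) := by ring
      rw [h8, norm_mul]
      rw [disk_of_im_eq (w+c) t himpos (by simp [Complex.add_im, hc, ht])]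
      simp
    rw [heqabs] at hbound
    exact lt_irrefl _ hbound

lemma conv_step (d : ℕ) (f g : Polynomial ℂ) (c : ℂ) (hg : g.natDegree ≤ d) :
    (∑ k ∈ Finset.range (d+2), (k.factorial : ℂ) * ((d+1-k).factorial : ℂ) 
        * f.coeff k * ((X - C c) * g).coeff (d+1-k))
    = ∑ k ∈ Finset.range (d+1), (k.factorial : ℂ) * ((d-k).factorial : ℂ) 
        * (C (((d+1:ℕ)):ℂ) * f - (X + C c) * derivative f).coeff k * g.coeff (d-k) := by
  have hgtop : g.coeff (d+1) = 0 := coeff_eq_zero_of_natDegree_lt (by omega)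
  have hcoeffmul : ∀ m : ℕ, ((X - C c) * g).coeff (m+1) = g.coeff m - c * g.coeff (m+1) := by
    intro m
    rw [sub_mul, coeff_sub, coeff_X_mul, coeff_C_mul]
  have hcoeff0 : ((X - C c) * g).coeff 0 = - (c * g.coeff 0) := by
    rw [sub_mul, coeff_sub, mul_coeff_zero, coeff_X_zero, zero_mul, coeff_C_mul, zero_sub]
  set A := ∑ k ∈ Finset.range (d+1), (k.factorial : ℂ) * ((d+1-k).factorial : ℂ) 
      * f.coeff k * g.coeff (d-k) with hA
  set B := ∑ k ∈ Finset.range (d+1), ((k+1).factorial : ℂ) * ((d-k).factorial : ℂ) 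
      * f.coeff (k+1) * g.coeff (d-k) with hB
  have hRHS : (∑ k ∈ Finset.range (d+1), (k.factorial : ℂ) * ((d-k).factorial : ℂ) 
        * (C (((d+1:ℕ)):ℂ) * f - (X + C c) * derivative f).coeff k * g.coeff (d-k)) 
      = A - c * B := by
    rw [hA, hB, Finset.mul_sum, ← Finset.sum_sub_distrib]
    apply Finset.sum_congr rfl
    intro k hk
    have hkd : k ≤ d := by simpa using Nat.lt_succ_iff.mp (Finset.mem_range.mp hk)
    rw [coeff_polarDf]
    have h2 : d + 1 - k = (d - k) + 1 := by omega
    have h3 : ((d+1-k).factorial : ℂ) = ((d:ℂ) + 1 - (k:ℂ)) * ((d-k).factorial : ℂ) := by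
      rw [h2, Nat.factorial_succ]
      push_cast [Nat.cast_sub hkd]
      ring
    have h4 : ((k+1).factorial : ℂ) = ((k:ℂ)+1) * (k.factorial : ℂ) := by
      rw [Nat.factorial_succ]; push_cast; ring
    rw [h3, h4]
    push_cast
    ring
  have hLHS : (∑ k ∈ Finset.range (d+2), (k.factorial : ℂ) * ((d+1-k).factorial : ℂ) 
        * f.coeff k * ((X - C c) * g).coeff (d+1-k)) = A - c * B := by
    rw [Finset.sum_range_succ]
    have hlast : ((d+1).factorial : ℂ) * (((d+1)-(d+1)).factorial : ℂ) 
        * f.coeff (d+1) * ((X - C c) * g).coeff (d+1-(d+1)) 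
        = - (c * (((d+1).factorial : ℂ) * f.coeff (d+1) * g.coeff 0)) := by
      rw [Nat.sub_self, hcoeff0]
      simp [Nat.factorial]
      ring
    rw [hlast]
    set CC := ∑ k ∈ Finset.range (d+1), (k.factorial : ℂ) * ((d+1-k).factorial : ℂ) 
        * f.coeff k * g.coeff (d+1-k) with hCC
    have hmain : (∑ k ∈ Finset.range (d+1), (k.factorial : ℂ) * ((d+1-k).factorial : ℂ) 
        * f.coeff k * ((X - C c) * g).coeff (d+1-k)) = A - c * CC := by
      rw [hA, hCC, Finset.mul_sum, ← Finset.sum_sub_distrib]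
      apply Finset.sum_congr rfl
      intro k hk
      have hkd : k ≤ d := by simpa using Nat.lt_succ_iff.mp (Finset.mem_range.mp hk)
      have h2 : d + 1 - k = (d - k) + 1 := by omega
      rw [h2, hcoeffmul (d-k), ← h2]
      ring
    rw [hmain]
    have hCB : CC + ((d+1).factorial : ℂ) * f.coeff (d+1) * g.coeff 0 = B := by
      rw [hCC, hB, Finset.sum_range_succ' _ d]
      have h0 : (Nat.factorial 0 : ℂ) * ((d+1-0).factorial : ℂ) * f.coeff 0 * g.coeff (d+1-0) = 0 := by
        rw [Nat.sub_zero, hgtop, mul_zero]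
      rw [h0, add_zero, Finset.sum_range_succ]
      have hlast2 : ((d+1).factorial : ℂ) * ((d-d).factorial : ℂ) * f.coeff (d+1) * g.coeff (d-d) 
          = ((d+1).factorial : ℂ) * f.coeff (d+1) * g.coeff 0 := by
        rw [Nat.sub_self]
        simp [Nat.factorial]
      rw [hlast2]
      congr 1
      apply Finset.sum_congr rfl
      intro k hk
      have hkd : k < d := Finset.mem_range.mp hk
      have e1 : d + 1 - (k+1) = d - k := by omega
      rw [e1]
    linear_combination - c * hCB
  rw [hLHS, hRHS]

lemma grace (d : ℕ) : ∀ (f g : Polynomial ℂ), f ≠ 0 → g ≠ 0 → f.natDegree = d → g.natDegree = d →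
    (∀ z ∈ f.roots, z.im < 0) → (∀ z ∈ g.roots, z.im = 0) →
    (∑ k ∈ Finset.range (d+1), (k.factorial : ℂ) * ((d-k).factorial : ℂ) 
      * f.coeff k * g.coeff (d-k)) ≠ 0 := by
  induction d with
  | zero =>
    intro f g hf hg hfd hgd _ _
    have h1 : f.coeff 0 ≠ 0 := by
      have : f.coeff 0 = f.leadingCoeff := by rw [leadingCoeff, hfd]
      rw [this]; exact leadingCoeff_ne_zero.mpr hf
    have h2 : g.coeff 0 ≠ 0 := by
      have : g.coeff 0 = g.leadingCoeff := by rw [leadingCoeff, hgd]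
      rw [this]; exact leadingCoeff_ne_zero.mpr hg
    simpa [Nat.factorial] using mul_ne_zero h1 h2
  | succ d ih =>
    intro f g hf hg hfd hgd hfr hgr
    have hgcard : g.roots.card = d + 1 := by rw [card_roots_complex, hgd]
    have hgr0 : g.roots ≠ 0 := by
      intro h; rw [h] at hgcard; simp at hgcard
    obtain ⟨c, hc⟩ := Multiset.exists_mem_of_ne_zero hgr0
    have hci : c.im = 0 := hgr c hc
    have hdvd : (X - C c) ∣ g := dvd_iff_isRoot.mpr (isRoot_of_mem_roots hc)
    obtain ⟨g1, hg1⟩ := hdvd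
    have hg1ne : g1 ≠ 0 := by
      rintro rfl
      rw [mul_zero] at hg1
      exact hg hg1
    have hgdeg : g1.natDegree = d := by
      have h1 := natDegree_mul (X_sub_C_ne_zero c) hg1ne
      rw [← hg1, hgd, natDegree_X_sub_C] at h1
      omega
    have hg1roots : ∀ z ∈ g1.roots, z.im = 0 := by
      intro z hz
      apply hgr
      rw [hg1, roots_mul (by rw [← hg1]; exact hg)]
      exact Multiset.mem_add.mpr (Or.inr hz)
    obtain ⟨hdeg, hne, hr⟩ := laguerre f (d+1) (by omega) hfd hfr c hci
    rw [hg1, conv_step d f g1 c (by omega)]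
    exact ih _ g1 hne hg1ne (by simpa using hdeg) hgdeg hr hg1roots

lemma aeval_conj' (p : Polynomial ℝ) (z : ℂ) :
    aeval ((starRingEnd ℂ) z) p = (starRingEnd ℂ) (aeval z p) := by
  have h := Polynomial.aeval_algHom_apply Complex.conjAe z p
  rw [Complex.conjAe_coe] at h
  exact h

lemma hyperbolic_X_pow (d : ℕ) : Hyperbolic ((X : Polynomial ℝ) ^ d) := by
  intro z hz
  simp only [map_pow, aeval_X] at hz
  have : z = 0 := by
    by_contra h
    exact (pow_ne_zero d h) hz
  rw [this]; rfl

lemma pencil_X_pow (d : ℕ) (a : ℕ → ℝ) :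
    NuijPencil d a ((X : Polynomial ℝ) ^ d) 1 
      = (X : Polynomial ℝ) ^ d +
        ∑ k ∈ Finset.Icc 1 d, Polynomial.C (a k * (d.descFactorial k : ℝ)) * X ^ (d - k) := by
  unfold NuijPencil
  congr 1
  apply Finset.sum_congr rfl
  intro k _
  rw [iterate_derivative_X_pow_eq_C_mul]
  rw [smul_eq_C_mul, one_pow, mul_one, ← mul_assoc, ← C_mul]

-- value of the pencil as the Grace pairing
lemma easy_dir (d : ℕ) (a : ℕ → ℝ) (h : IsNuijSeq d a) :
    Hyperbolic ((X : Polynomial ℝ) ^ d +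
        ∑ k ∈ Finset.Icc 1 d, Polynomial.C (a k * (d.descFactorial k : ℝ)) * X ^ (d - k)) := by
  have := h ((X : Polynomial ℝ)^d) (natDegree_X_pow d) (hyperbolic_X_pow d) 1
  rwa [pencil_X_pow d a] at this

lemma sum_Icc_one {M : Type*} [AddCommMonoid M] (d : ℕ) (h : ℕ → M) :
    ∑ k ∈ Finset.Icc 1 d, h k = ∑ i ∈ Finset.range d, h (i+1) := by
  rw [← Finset.Ico_add_one_right_eq_Icc, Finset.sum_Ico_eq_sum_range]
  exact Finset.sum_congr (by norm_num) (fun i _ => by rw [add_comm])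

lemma key_contra (d : ℕ) (a : ℕ → ℝ) (s : ℝ)
    (hQ : Hyperbolic ((X : Polynomial ℝ) ^ d +
        ∑ k ∈ Finset.Icc 1 d, Polynomial.C (a k * (d.descFactorial k : ℝ)) * X ^ (d - k)))
    (p : Polynomial ℝ) (hdeg : p.natDegree = d) (hyp : Hyperbolic p)
    (z₁ : ℂ) (him : 0 < z₁.im) (hroot : aeval z₁ (NuijPencil d a p s) = 0) : False := by
  set F : Polynomial ℂ := p.map (algebraMap ℝ ℂ) with hF
  have hp0 : p ≠ 0 := by
    intro h
    have h2 := hyp Complex.I (by rw [h]; simp)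
    rw [Complex.I_im] at h2
    exact one_ne_zero h2
  have hF0 : F ≠ 0 := map_ne_zero hp0
  have hFdeg : F.natDegree = d := by rw [hF, natDegree_map, hdeg]
  set f : Polynomial ℂ := taylor z₁ F with hf
  have hf0 : f ≠ 0 := by
    intro h
    apply hF0
    apply taylor_injective z₁
    rw [← hf, h, map_zero]
  have hfdeg : f.natDegree = d := by rw [hf, natDegree_taylor, hFdeg]
  have hfroots : ∀ z ∈ f.roots, z.im < 0 := by
    intro z hz
    have h1 : eval z f = 0 := isRoot_of_mem_roots hz
    rw [hf, taylor_eval] at h1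
    have h2 : aeval (z + z₁) p = 0 := by
      rw [aeval_def, ← eval_map, ← hF]; exact h1
    have h3 := hyp _ h2
    simp only [Complex.add_im] at h3
    linarith
  set gq : Polynomial ℂ := X^d + ∑ k ∈ Finset.Icc 1 d,
      C ((a k : ℂ) * (s:ℂ)^k * (d.descFactorial k : ℂ)) * X^(d-k) with hgq
  have hsub_ne : ∀ k ∈ Finset.Icc 1 d, d - k ≠ d := by
    intro k hk
    have := Finset.mem_Icc.mp hk
    omega
  have hgqcoeff_d : gq.coeff d = 1 := by
    rw [hgq, coeff_add, coeff_X_pow, if_pos rfl, finset_sum_coeff]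
    rw [Finset.sum_eq_zero, add_zero]
    intro k hk
    rw [coeff_C_mul, coeff_X_pow, if_neg (fun h => hsub_ne k hk h.symm), mul_zero]
  have hgq0 : gq ≠ 0 := fun h => by simp [h] at hgqcoeff_d
  have hgqdeg : gq.natDegree = d := by
    apply le_antisymm
    · rw [hgq]
      apply (natDegree_add_le _ _).trans
      simp only [natDegree_X_pow, max_le_iff, le_refl, true_and]
      apply natDegree_sum_le_of_forall_le
      intro k _
      apply (natDegree_C_mul_le _ _).trans
      simp only [natDegree_X_pow]
      omega
    · exact le_natDegree_of_ne_zero (by rw [hgqcoeff_d]; exact one_ne_zero)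
  have hgqcoeff : ∀ k ∈ Finset.Icc 1 d, 
      gq.coeff (d - k) = (a k : ℂ) * (s:ℂ)^k * (d.descFactorial k : ℂ) := by
    intro k hk
    obtain ⟨hk1, hk2⟩ := Finset.mem_Icc.mp hk
    rw [hgq, coeff_add, coeff_X_pow, if_neg (hsub_ne k hk), finset_sum_coeff, zero_add]
    rw [Finset.sum_eq_single k]
    · rw [coeff_C_mul, coeff_X_pow, if_pos rfl, mul_one]
    · intro j hj hjk
      obtain ⟨hj1, hj2⟩ := Finset.mem_Icc.mp hj
      rw [coeff_C_mul, coeff_X_pow, if_neg (by omega), mul_zero]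
    · intro h; exact absurd hk h
  have hgqroots : ∀ z ∈ gq.roots, z.im = 0 := by
    intro w hw
    have h1 : eval w gq = 0 := isRoot_of_mem_roots hw
    rcases eq_or_ne s 0 with rfl | hs
    · -- s = 0 : gq = X^d
      have h2 : eval w gq = w^d := by
        rw [hgq]
        simp only [eval_add, eval_pow, eval_X, eval_finset_sum]
        rw [Finset.sum_eq_zero, add_zero]
        intro k hk
        have hk1 := (Finset.mem_Icc.mp hk).1
        simp [zero_pow (by omega : k ≠ 0)]
      rw [h2] at h1
      have hw0 : w = 0 := (pow_eq_zero_iff'.mp h1).1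
      rw [hw0]; rfl
    · have hsC : (s:ℂ) ≠ 0 := Complex.ofReal_ne_zero.mpr hs
      have key : eval w gq = (s:ℂ)^d * aeval (w / s) ((X : Polynomial ℝ) ^ d +
          ∑ k ∈ Finset.Icc 1 d, Polynomial.C (a k * (d.descFactorial k : ℝ)) * X ^ (d - k)) := by
        rw [hgq]
        simp only [eval_add, eval_pow, eval_X, eval_finset_sum, eval_mul, eval_C, 
          map_add, map_pow, aeval_X, map_sum, map_mul, aeval_C]
        rw [mul_add, Finset.mul_sum]
        congr 1
        · rw [div_pow, mul_div_cancel₀ _ (pow_ne_zero d hsC)]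
        · apply Finset.sum_congr rfl
          intro k hk
          obtain ⟨hk1, hk2⟩ := Finset.mem_Icc.mp hk
          have hsplit : (s:ℂ)^d = (s:ℂ)^k * (s:ℂ)^(d-k) := by
            rw [← pow_add]; congr 1; omega
          rw [div_pow, hsplit]
          simp only [Complex.coe_algebraMap]
          push_cast
          field_simp
      rw [key] at h1
      have h2 : aeval (w / s) ((X : Polynomial ℝ) ^ d +
          ∑ k ∈ Finset.Icc 1 d, Polynomial.C (a k * (d.descFactorial k : ℝ)) * X ^ (d - k)) = 0 := by
        rcases mul_eq_zero.mp h1 with h | h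
        · exact absurd h (pow_ne_zero d hsC)
        · exact h
      have h3 := hQ _ h2
      have h4 : w = (w / s) * (s:ℂ) := by field_simp
      rw [h4, Complex.mul_im, h3, Complex.ofReal_im, zero_mul, mul_zero, add_zero]
  -- the pairing identity
  have hkf : ∀ k, (k.factorial : ℂ) * f.coeff k = aeval z₁ (derivative^[k] p) := by
    intro k
    have h1 : (derivative^[k]) F = k.factorial • hasseDeriv k F := by
      rw [← factorial_smul_hasseDeriv]; rfl
    have h2 : eval z₁ (derivative^[k] F) = (k.factorial : ℂ) * eval z₁ (hasseDeriv k F) := by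
      rw [h1, nsmul_eq_mul, eval_mul, eval_natCast]
    rw [hf, taylor_coeff, ← h2, hF, iterate_derivative_map, eval_map, ← aeval_def]
  have hpair : (∑ k ∈ Finset.range (d+1), (k.factorial : ℂ) * ((d-k).factorial : ℂ)
      * f.coeff k * gq.coeff (d-k)) = (d.factorial : ℂ) * aeval z₁ (NuijPencil d a p s) := by
    have hRHS : aeval z₁ (NuijPencil d a p s) = aeval z₁ p 
        + ∑ k ∈ Finset.Icc 1 d, ((a k : ℂ) * (s:ℂ)^k) * aeval z₁ (derivative^[k] p) := by
      unfold NuijPencil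
      rw [map_add, map_sum]
      congr 1
      apply Finset.sum_congr rfl
      intro k _
      rw [map_smul, Complex.real_smul]
      push_cast
      ring
    rw [hRHS, Finset.sum_range_succ']
    have hT0 : (Nat.factorial 0 : ℂ) * ((d-0).factorial : ℂ) * f.coeff 0 * gq.coeff (d-0) 
        = (d.factorial : ℂ) * aeval z₁ p := by
      rw [Nat.sub_zero, hgqcoeff_d, mul_one, Nat.factorial_zero, Nat.cast_one, one_mul]
      rw [hf, taylor_coeff_zero, hF, eval_map, ← aeval_def]
    rw [hT0, mul_add, add_comm]
    congr 1
    rw [Finset.mul_sum, sum_Icc_one d]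
    apply Finset.sum_congr rfl
    intro i hi
    have hid : i < d := Finset.mem_range.mp hi
    have hicc : i + 1 ∈ Finset.Icc 1 d := Finset.mem_Icc.mpr ⟨by omega, by omega⟩
    rw [hgqcoeff _ hicc]
    have hfact : ((d-(i+1)).factorial : ℂ) * (d.descFactorial (i+1) : ℂ) = (d.factorial : ℂ) := by
      exact_mod_cast congrArg (Nat.cast : ℕ → ℂ) (Nat.factorial_mul_descFactorial (by omega))
    calc ((i+1).factorial : ℂ) * ((d-(i+1)).factorial : ℂ) * f.coeff (i+1) 
          * ((a (i+1) : ℂ) * (s:ℂ)^(i+1) * (d.descFactorial (i+1) : ℂ)) 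
        = (((d-(i+1)).factorial : ℂ) * (d.descFactorial (i+1) : ℂ)) 
          * ((a (i+1) : ℂ) * (s:ℂ)^(i+1)) * (((i+1).factorial : ℂ) * f.coeff (i+1)) := by ring
      _ = (d.factorial : ℂ) * ((a (i+1) : ℂ) * (s:ℂ)^(i+1) * aeval z₁ (derivative^[i+1] p)) := by
          rw [hfact, hkf]; ring
  have hG := grace d f gq hf0 hgq0 hfdeg hgqdeg hfroots hgqroots
  rw [hpair, hroot, mul_zero] at hG
  exact hG rfl


theorem isNuijSeq_iff_hyperbolic (d : ℕ) (a : ℕ → ℝ) :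
    IsNuijSeq d a ↔
      Hyperbolic ((X : Polynomial ℝ) ^ d +
        ∑ k ∈ Finset.Icc 1 d, Polynomial.C (a k * (d.descFactorial k : ℝ)) * X ^ (d - k)) := by
  constructor
  · exact easy_dir d a
  · intro hQ p hdeg hyp s z₀ hz₀
    by_contra him
    rcases lt_or_gt_of_ne him with hneg | hpos
    · have hc : aeval ((starRingEnd ℂ) z₀) (NuijPencil d a p s) = 0 := by
        rw [aeval_conj', hz₀, map_zero]
      have hcim : 0 < ((starRingEnd ℂ) z₀).im := by
        rw [Complex.conj_im]; linarith
      exact key_contra d a s hQ p hdeg hyp _ hcim hc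
    · exact key_contra d a s hQ p hdeg hyp z₀ hpos hz₀
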